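/- There exists a universal constant $C>0$ with the following property. Let $\bar f:[0,1]\to[0,\infty)$ be continuously differentiable and concave with $\bar f(1)=0$, let $f:[0,1]\to\mathbb R$ be continuous with $|f|\le\bar f$ on $[0,1]$, let $n\ge 1$ be an integer and $r\in(0,1)$. Then $\Big| \frac{n^2}{r^{4n+2}}\int_0^r s^{8n-1}\Big(\int_s^1 \tau^{1-4n} f(\tau)\,d\tau\Big)ds \Big| \le C\Big(\sup_{\tau\in[0,r]}\bar f(\tau) + \frac{1}{n}\sup_{\tau\in[0,r]} \tau\,\bar f'(\tau)\Big).$ -/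

import Mathlib

open Real MeasureTheory Set intervalIntegral

private lemma stmt6_aux1 (F P M ρ r N : ℝ) (hF0 : 0 ≤ F) (hFM : F ≤ M) (hM0 : 0 ≤ M)
    (hP0 : 0 ≤ P) (hr0 : 0 < r) (hr1 : r ≤ 1) (hρ1 : 1 ≤ ρ)
    (h42 : 0 < 4*N-2) (h43 : 0 < 4*N-3) :
    (F - P*r) * ((1 - ρ) / (2 - 4*N)) + P * ((1 - ρ*r) / (3 - 4*N))
      ≤ M * ρ / (4*N-2) + (P*r) * ρ / ((4*N-3)*(4*N-2)) := by
  have hρ0 : (0:ℝ) < ρ := lt_of_lt_of_le one_pos hρ1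
  have e1 : (1 - ρ) / (2 - 4*N) = (ρ - 1) / (4*N - 2) := by
    rw [div_eq_div_iff (by linarith) (by linarith)]; ring
  have e2 : (1 - ρ*r) / (3 - 4*N) = (ρ*r - 1) / (4*N - 3) := by
    rw [div_eq_div_iff (by linarith) (by linarith)]; ring
  rw [e1, e2]
  have c1 : F * ((ρ - 1) / (4*N-2)) ≤ M * ρ / (4*N-2) := by
    rw [mul_div_assoc]
    exact mul_le_mul hFM ((div_le_div_iff_of_pos_right h42).2 (by linarith))
      (div_nonneg (by linarith) h42.le) hM0
  have c2 : P * ((ρ*r - 1) / (4*N-3)) - (P*r) * ((ρ - 1) / (4*N-2))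
      ≤ (P*r) * ρ / ((4*N-3)*(4*N-2)) := by
    have heq : P * ((ρ*r - 1) / (4*N-3)) - (P*r) * ((ρ - 1) / (4*N-2))
        = (P*(ρ*r-1)*(4*N-2) - P*r*(ρ-1)*(4*N-3)) / ((4*N-3)*(4*N-2)) := by
      field_simp
    rw [heq]
    apply (div_le_div_iff_of_pos_right (mul_pos h43 h42)).2
    nlinarith [mul_nonneg hP0 (mul_nonneg (sub_nonneg.2 hr1) h43.le),
      mul_nonneg (mul_nonneg hP0 hr0.le) hρ0.le]
  nlinarith [c1, c2]

private lemma stmt6_aux2 (M D N : ℝ) (hM0 : 0 ≤ M) (hD0 : 0 ≤ D) (hN : 1 ≤ N) :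
    N^2 * (M / ((4*N-2)*(4*N+2))) + (N/8) * (M/(4*N-2) + D/((4*N-3)*(4*N-2)))
      ≤ 1 * (M + (1/N) * D) := by
  have hN0 : (0:ℝ) < N := lt_of_lt_of_le one_pos hN
  have h42 : (0:ℝ) < 4*N-2 := by linarith
  have h43 : (0:ℝ) < 4*N-3 := by linarith
  have h44 : (0:ℝ) < 4*N+2 := by linarith
  have c1 : N^2 * (M / ((4*N-2)*(4*N+2))) ≤ M/12 := by
    rw [mul_div_assoc', div_le_div_iff₀ (by positivity) (by norm_num)]
    nlinarith [mul_nonneg hM0 (sq_nonneg (N-1)), sq_nonneg N, mul_nonneg hM0 (sq_nonneg N)]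
  have c2 : (N/8) * (M/(4*N-2)) ≤ M/16 := by
    rw [div_mul_div_comm, div_le_div_iff₀ (by positivity) (by norm_num)]
    nlinarith [mul_nonneg hM0 (sub_nonneg.2 hN)]
  have c3 : (N/8) * (D/((4*N-3)*(4*N-2))) ≤ (1/N) * D := by
    rw [div_mul_div_comm, one_div, inv_mul_eq_div, div_le_div_iff₀ (by positivity) hN0]
    nlinarith [mul_nonneg hD0 (sq_nonneg (N-1)), mul_nonneg hD0 (sq_nonneg N),
      mul_nonneg (mul_nonneg hD0 hN0.le) (sub_nonneg.2 hN)]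
  have hexp : (N/8) * (M/(4*N-2) + D/((4*N-3)*(4*N-2)))
      = (N/8) * (M/(4*N-2)) + (N/8) * (D/((4*N-3)*(4*N-2))) := by ring
  rw [hexp]
  nlinarith [c1, c2, c3, hM0, hD0, hN0]
private lemma stmt6_aux3 (M D N u w ρ : ℝ) (hu : u ≠ 0) (hN0 : 0 < N)
    (h42 : (4*N-2) ≠ 0) (h43 : (4*N-3) ≠ 0) (h44 : (4*N+2) ≠ 0) (hwρ : w * ρ = 1) :
    N^2 / u * ((M/(4*N-2)) * (u/(4*N+2))
        + (M*ρ/(4*N-2) + D*ρ/((4*N-3)*(4*N-2))) * (u*w/(8*N)))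
      = N^2 * (M / ((4*N-2)*(4*N+2))) + (N/8) * (M/(4*N-2) + D/((4*N-3)*(4*N-2))) := by
  have hw : w ≠ 0 := by
    intro h; rw [h, zero_mul] at hwρ; exact zero_ne_one hwρ
  have hρw : ρ = w⁻¹ := by
    field_simp
    linarith [hwρ]
  subst hρw
  field_simp

theorem stmt6 :
    ∃ C > (0:ℝ), ∀ (fbar : ℝ → ℝ),
      (∀ r ∈ Set.Icc (0:ℝ) 1, 0 ≤ fbar r) →
      (∀ x ∈ Set.Icc (0:ℝ) 1, DifferentiableAt ℝ fbar x) →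
      ContinuousOn (deriv fbar) (Set.Icc 0 1) →
      ConcaveOn ℝ (Set.Icc 0 1) fbar →
      fbar 1 = 0 →
      ∀ (f : ℝ → ℝ), ContinuousOn f (Set.Icc 0 1) →
      (∀ r ∈ Set.Icc (0:ℝ) 1, |f r| ≤ fbar r) →
      ∀ (n : ℕ), 1 ≤ n → ∀ r ∈ Set.Ioo (0:ℝ) 1,
        |((n:ℝ) ^ 2 / r ^ (4 * (n:ℤ) + 2)) *
            ∫ s in (0:ℝ)..r, s ^ (8 * (n:ℤ) - 1) * ∫ τ in s..(1:ℝ), τ ^ (1 - 4 * (n:ℤ)) * f τ|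
          ≤ C * (sSup (fbar '' Set.Icc 0 r) + (1 / (n:ℝ)) *
              sSup ((fun τ => τ * deriv fbar τ) '' Set.Icc 0 r)) := by
  refine ⟨1, one_pos, ?_⟩
  intro fbar hpos hdiff hderiv hconc hf1 f hfc hfle n hn r hr
  obtain ⟨hr0, hr1⟩ := hr
  have hN : (1:ℝ) ≤ (n:ℝ) := by exact_mod_cast hn
  have hN0 : (0:ℝ) < (n:ℝ) := lt_of_lt_of_le one_pos hN
  set N := (n:ℝ) with hNdef
  have hnz : (1:ℤ) ≤ (n:ℤ) := by exact_mod_cast hn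
  have h42 : (0:ℝ) < 4*N - 2 := by linarith
  have h43 : (0:ℝ) < 4*N - 3 := by linarith
  have h44 : (0:ℝ) < 4*N + 2 := by linarith
  -- continuity of fbar
  have hfbar_cont : ContinuousOn fbar (Set.Icc 0 1) :=
    fun x hx => ((hdiff x hx).continuousAt).continuousWithinAt
  have hsub : Set.Icc (0:ℝ) r ⊆ Set.Icc 0 1 := Set.Icc_subset_Icc le_rfl hr1.le
  -- M
  set M := sSup (fbar '' Set.Icc 0 r) with hMdef
  have hbddM : BddAbove (fbar '' Set.Icc 0 r) :=
    (isCompact_Icc.image_of_continuousOn (hfbar_cont.mono hsub)).bddAbove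
  have hMle : ∀ τ ∈ Set.Icc 0 r, fbar τ ≤ M := fun τ hτ => le_csSup hbddM ⟨τ, hτ, rfl⟩
  have hM0 : 0 ≤ M := le_trans (hpos 0 ⟨le_rfl, zero_le_one⟩) (hMle 0 ⟨le_rfl, hr0.le⟩)
  -- D
  set D := sSup ((fun τ => τ * deriv fbar τ) '' Set.Icc 0 r) with hDdef
  have hbddD : BddAbove ((fun τ => τ * deriv fbar τ) '' Set.Icc 0 r) :=
    (isCompact_Icc.image_of_continuousOn
      (continuous_id.continuousOn.mul (hderiv.mono hsub))).bddAbove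
  have hD0 : (0:ℝ) ≤ D := by
    have := le_csSup hbddD ⟨0, ⟨le_rfl, hr0.le⟩, rfl⟩
    simpa using this
  have hrD : r * deriv fbar r ≤ D := le_csSup hbddD ⟨r, ⟨hr0.le, le_rfl⟩, rfl⟩
  -- P
  set P := max (deriv fbar r) 0 with hPdef
  have hP0 : 0 ≤ P := le_max_right _ _
  have hPrD : P * r ≤ D := by
    rcases le_total (deriv fbar r) 0 with h | h
    · have hP : P = 0 := by rw [hPdef]; exact max_eq_right h
      rw [hP]; simpa using hD0
    · have hP : P = deriv fbar r := by rw [hPdef]; exact max_eq_left h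
      rw [hP, mul_comm]; exact hrD
  -- tangent line bound
  have htang : ∀ τ ∈ Set.Icc r 1, fbar τ ≤ fbar r + P * (τ - r) := by
    intro τ hτ
    rcases eq_or_lt_of_le hτ.1 with h | h
    · simp [← h]
    · have hs := hconc.slope_le_deriv ⟨hr0.le, hr1.le⟩ ⟨hr0.le.trans hτ.1, hτ.2⟩ h
        (hdiff r ⟨hr0.le, hr1.le⟩)
      rw [slope_def_field] at hs
      have h2 : (fbar τ - fbar r) / (τ - r) ≤ P := le_trans hs (le_max_left _ _)
      have h3 : fbar τ - fbar r ≤ P * (τ - r) := by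
        rw [div_le_iff₀ (by linarith)] at h2; linarith
      linarith
  -- exponents
  set x1 : ℤ := 1 - 4*(n:ℤ) with hx1
  set x2 : ℤ := 2 - 4*(n:ℤ) with hx2
  set ρ : ℝ := r ^ x2 with hρ
  have hρ0 : 0 < ρ := zpow_pos hr0 _
  set K : ℝ := M * ρ / (4*N-2) + D * ρ / ((4*N-3)*(4*N-2)) with hK
  have hK0 : 0 ≤ K := by positivity
  -- continuity helpers
  have hcz : ∀ (k : ℤ) (a b : ℝ), 0 < a → ContinuousOn (fun τ:ℝ => τ^k) (Set.Icc a b) := by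
    intro k a b ha x hx
    exact (continuousAt_zpow₀ x k (Or.inl (ne_of_gt (lt_of_lt_of_le ha hx.1)))).continuousWithinAt
  have hIg : ∀ (a b : ℝ), 0 < a → a ≤ b → b ≤ 1 →
      IntervalIntegrable (fun τ => τ ^ x1 * fbar τ) volume a b := by
    intro a b ha hab hb1
    apply ContinuousOn.intervalIntegrable
    rw [Set.uIcc_of_le hab]
    exact (hcz x1 a b ha).mul
      (hfbar_cont.mono (Set.Icc_subset_Icc ha.le hb1))
  -- inner bound
  have hx1ne : x1 ≠ -1 := by rw [hx1]; omega
  have hx2ne : x2 ≠ -1 := by rw [hx2]; omega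
  set x3 : ℤ := 3 - 4*(n:ℤ) with hx3
  set ρ3 : ℝ := r ^ x3 with hρ3
  have hρ3eq : ρ3 = ρ * r := by
    rw [hρ3, hρ]
    have : x3 = x2 + 1 := by rw [hx2, hx3]; ring
    rw [this, zpow_add_one₀ (ne_of_gt hr0)]
  have h0r1 : (0:ℝ) ∉ Set.uIcc r (1:ℝ) := by
    rw [Set.uIcc_of_le hr1.le]
    exact fun h => (not_le.2 hr0) h.1
  have hd1 : ((x1:ℝ) + 1) = 2 - 4*N := by
    rw [hx1]; simp only [hNdef]; push_cast; ring
  have hd2 : ((x2:ℝ) + 1) = 3 - 4*N := by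
    rw [hx2]; simp only [hNdef]; push_cast; ring
  have hx12 : x1 + 1 = x2 := by rw [hx1, hx2]; ring
  have hx23 : x2 + 1 = x3 := by rw [hx2, hx3]; ring
  have hinner : ∀ s ∈ Set.Ioc (0:ℝ) r,
      |∫ τ in s..(1:ℝ), τ ^ x1 * f τ| ≤ M * s ^ x2 / (4*N-2) + K := by
    intro s hs
    obtain ⟨hs0, hsr⟩ := hs
    have hs1 : s ≤ 1 := hsr.trans hr1.le
    have h0sr : (0:ℝ) ∉ Set.uIcc s r := by
      rw [Set.uIcc_of_le hsr]
      exact fun h => (not_le.2 hs0) h.1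
    -- step 1: bound by fbar integral
    have hb1 : |∫ τ in s..(1:ℝ), τ ^ x1 * f τ| ≤ ∫ τ in s..(1:ℝ), τ ^ x1 * fbar τ := by
      have hI : IntervalIntegrable (fun τ => τ ^ x1 * fbar τ) volume s 1 := hIg s 1 hs0 hs1 le_rfl
      have hae : ∀ᵐ t ∂(volume.restrict (Set.uIoc s 1)), ‖t ^ x1 * f t‖ ≤ t ^ x1 * fbar t := by
        refine (ae_restrict_mem measurableSet_uIoc).mono ?_
        intro t ht
        rw [Set.uIoc_of_le hs1] at ht
        have ht0 : 0 < t := hs0.trans ht.1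
        have htpow : 0 < t ^ x1 := zpow_pos ht0 _
        rw [Real.norm_eq_abs, abs_mul, abs_of_pos htpow]
        exact mul_le_mul_of_nonneg_left (hfle t ⟨ht0.le, ht.2⟩) htpow.le
      have h2 := intervalIntegral.norm_integral_le_of_norm_le hs1
        (by rw [← Set.uIoc_of_le hs1]; exact (ae_restrict_iff' measurableSet_uIoc).1 hae) hI
      rw [Real.norm_eq_abs] at h2
      exact h2
    -- split
    have hIa := hIg s r hs0 hsr hr1.le
    have hIb := hIg r 1 hr0 hr1.le le_rfl
    have hsplit : ∫ τ in s..(1:ℝ), τ ^ x1 * fbar τ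
        = (∫ τ in s..r, τ ^ x1 * fbar τ) + ∫ τ in r..(1:ℝ), τ ^ x1 * fbar τ :=
      (intervalIntegral.integral_add_adjacent_intervals hIa hIb).symm
    -- piece 1
    have hp1 : ∫ τ in s..r, τ ^ x1 * fbar τ ≤ M * s ^ x2 / (4*N-2) := by
      have hIa' : IntervalIntegrable (fun τ => M * τ ^ x1) volume s r := by
        apply ContinuousOn.intervalIntegrable
        rw [Set.uIcc_of_le hsr]
        exact continuousOn_const.mul (hcz x1 s r hs0)
      have hmono : ∫ τ in s..r, τ ^ x1 * fbar τ ≤ ∫ τ in s..r, M * τ ^ x1 := by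
        apply intervalIntegral.integral_mono_on hsr hIa hIa'
        intro τ hτ
        have hτ0 : 0 < τ := lt_of_lt_of_le hs0 hτ.1
        rw [mul_comm M]
        exact mul_le_mul_of_nonneg_left (hMle τ ⟨hτ0.le, hτ.2⟩) (zpow_pos hτ0 _).le
      have hcomp : ∫ τ in s..r, M * τ ^ x1 = M * ((r ^ x2 - s ^ x2) / (2 - 4*N)) := by
        rw [intervalIntegral.integral_const_mul, integral_zpow (Or.inr ⟨hx1ne, h0sr⟩), hx12, hd1]
      refine hmono.trans (hcomp.trans_le ?_)
      have hsx2 : (0:ℝ) < s ^ x2 := zpow_pos hs0 _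
      have hrx2 : (0:ℝ) < r ^ x2 := zpow_pos hr0 _
      have he : (r ^ x2 - s ^ x2) / (2 - 4*N) = (s ^ x2 - r ^ x2) / (4*N - 2) := by
        rw [div_eq_div_iff (by linarith) (by linarith)]; ring
      rw [he, mul_div_assoc]
      exact mul_le_mul_of_nonneg_left
        ((div_le_div_iff_of_pos_right h42).2 (by linarith)) hM0
    -- piece 2
    have hp2 : ∫ τ in r..(1:ℝ), τ ^ x1 * fbar τ
        ≤ M * ρ / (4*N-2) + (P*r) * ρ / ((4*N-3)*(4*N-2)) := by
      have hIb' : IntervalIntegrable (fun τ => τ ^ x1 * (fbar r + P*(τ - r))) volume r 1 := by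
        apply ContinuousOn.intervalIntegrable
        rw [Set.uIcc_of_le hr1.le]
        exact (hcz x1 r 1 hr0).mul
          (continuousOn_const.add (continuousOn_const.mul
            (continuousOn_id.sub continuousOn_const)))
      have hmono2 : ∫ τ in r..(1:ℝ), τ ^ x1 * fbar τ
          ≤ ∫ τ in r..(1:ℝ), τ ^ x1 * (fbar r + P*(τ - r)) := by
        apply intervalIntegral.integral_mono_on hr1.le hIb hIb'
        intro τ hτ
        exact mul_le_mul_of_nonneg_left (htang τ hτ)
          (zpow_pos (lt_of_lt_of_le hr0 hτ.1) _).le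
      have hcongr : ∫ τ in r..(1:ℝ), τ ^ x1 * (fbar r + P*(τ - r))
          = ∫ τ in r..(1:ℝ), ((fbar r - P*r) * τ ^ x1 + P * τ ^ x2) := by
        apply intervalIntegral.integral_congr
        intro τ hτ
        rw [Set.uIcc_of_le hr1.le] at hτ
        have hτ0 : τ ≠ 0 := ne_of_gt (lt_of_lt_of_le hr0 hτ.1)
        have hττ : τ ^ x2 = τ ^ x1 * τ := by rw [← hx12, zpow_add_one₀ hτ0]
        simp only [hττ]; ring
      have hI1 : IntervalIntegrable (fun τ => (fbar r - P*r) * τ ^ x1) volume r 1 := by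
        apply ContinuousOn.intervalIntegrable
        rw [Set.uIcc_of_le hr1.le]
        exact continuousOn_const.mul (hcz x1 r 1 hr0)
      have hI2 : IntervalIntegrable (fun τ => P * τ ^ x2) volume r 1 := by
        apply ContinuousOn.intervalIntegrable
        rw [Set.uIcc_of_le hr1.le]
        exact continuousOn_const.mul (hcz x2 r 1 hr0)
      have hcomp2 : ∫ τ in r..(1:ℝ), ((fbar r - P*r) * τ ^ x1 + P * τ ^ x2)
          = (fbar r - P*r) * ((1 - ρ) / (2 - 4*N)) + P * ((1 - ρ3) / (3 - 4*N)) := by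
        rw [intervalIntegral.integral_add hI1 hI2, intervalIntegral.integral_const_mul,
          intervalIntegral.integral_const_mul, integral_zpow (Or.inr ⟨hx1ne, h0r1⟩),
          integral_zpow (Or.inr ⟨hx2ne, h0r1⟩), hx12, hx23, hd1, hd2, one_zpow, one_zpow,
          ← hρ, ← hρ3]
      have harith : (fbar r - P*r) * ((1 - ρ) / (2 - 4*N)) + P * ((1 - ρ3) / (3 - 4*N))
          ≤ M * ρ / (4*N-2) + (P*r) * ρ / ((4*N-3)*(4*N-2)) := by
        rw [hρ3eq]
        exact stmt6_aux1 (fbar r) P M ρ r N (hpos r ⟨hr0.le, hr1.le⟩)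
          (hMle r ⟨hr0.le, le_rfl⟩) hM0 hP0 hr0 hr1.le
          (one_le_zpow_of_nonpos₀ hr0 hr1.le (by rw [hx2]; omega)) h42 h43
      exact hmono2.trans (hcongr.trans_le (hcomp2.trans_le harith))
    -- combine
    have hKe : M * ρ / (4*N-2) + (P*r) * ρ / ((4*N-3)*(4*N-2)) ≤ K := by
      rw [hK]
      refine add_le_add_right ((div_le_div_iff_of_pos_right (mul_pos h43 h42)).2 ?_) _
      exact mul_le_mul_of_nonneg_right hPrD hρ0.le
    calc |∫ τ in s..(1:ℝ), τ ^ x1 * f τ| ≤ ∫ τ in s..(1:ℝ), τ ^ x1 * fbar τ := hb1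
      _ = _ := hsplit
      _ ≤ M * s ^ x2 / (4*N-2) + K := add_le_add hp1 (hp2.trans hKe)
  -- outer bound
  have houter : |∫ s in (0:ℝ)..r, s ^ (8*(n:ℤ) - 1) * ∫ τ in s..(1:ℝ), τ ^ x1 * f τ|
      ≤ (M/(4*N-2)) * (r ^ (4*n+2) / (4*N+2)) + K * (r ^ (8*n) / (8*N)) := by
    have hG : IntervalIntegrable
        (fun s : ℝ => (M/(4*N-2)) * s ^ (4*n+1) + K * s ^ (8*n-1)) volume 0 r :=
      (((continuous_const.mul (continuous_pow _)).add
        (continuous_const.mul (continuous_pow _))).intervalIntegrable 0 r)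
    have hae : ∀ᵐ t ∂(volume.restrict (Set.uIoc (0:ℝ) r)),
        ‖t ^ (8*(n:ℤ) - 1) * ∫ τ in t..(1:ℝ), τ ^ x1 * f τ‖
          ≤ (M/(4*N-2)) * t ^ (4*n+1) + K * t ^ (8*n-1) := by
      refine (ae_restrict_mem measurableSet_uIoc).mono ?_
      intro t ht
      rw [Set.uIoc_of_le hr0.le] at ht
      have ht0 : 0 < t := ht.1
      have hpow : (0:ℝ) < t ^ (8*(n:ℤ) - 1) := zpow_pos ht0 _
      have hb := hinner t ⟨ht.1, ht.2⟩
      rw [Real.norm_eq_abs, abs_mul, abs_of_pos hpow]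
      have h2 : t ^ (8*(n:ℤ) - 1) * |∫ τ in t..(1:ℝ), τ ^ x1 * f τ|
          ≤ t ^ (8*(n:ℤ) - 1) * (M * t ^ x2 / (4*N-2) + K) :=
        mul_le_mul_of_nonneg_left hb hpow.le
      refine h2.trans (le_of_eq ?_)
      have hyx : t ^ (8*(n:ℤ) - 1) * t ^ x2 = t ^ (4*n+1 : ℕ) := by
        rw [← zpow_natCast t (4*n+1), ← zpow_add₀ (ne_of_gt ht0)]
        congr 1
        rw [hx2]; push_cast; ring
      have hyy : t ^ (8*(n:ℤ) - 1) = t ^ (8*n-1 : ℕ) := by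
        rw [← zpow_natCast t (8*n-1)]
        congr 1
        have : ((8*n-1 : ℕ) : ℤ) = 8*(n:ℤ) - 1 := by
          push_cast [Nat.cast_sub (by omega : 1 ≤ 8*n)]; ring
        rw [this]
      calc t ^ (8*(n:ℤ) - 1) * (M * t ^ x2 / (4*N-2) + K)
          = (M/(4*N-2)) * (t ^ (8*(n:ℤ) - 1) * t ^ x2) + K * t ^ (8*(n:ℤ) - 1) := by ring
        _ = (M/(4*N-2)) * t ^ (4*n+1) + K * t ^ (8*n-1) := by rw [hyx, hyy]
    have h3 := intervalIntegral.norm_integral_le_of_norm_le hr0.le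
      (by rw [← Set.uIoc_of_le hr0.le]; exact (ae_restrict_iff' measurableSet_uIoc).1 hae) hG
    rw [Real.norm_eq_abs] at h3
    refine h3.trans (le_of_eq ?_)
    have hI1 : IntervalIntegrable (fun s : ℝ => (M/(4*N-2)) * s ^ (4*n+1)) volume 0 r :=
      ((continuous_const.mul (continuous_pow _)).intervalIntegrable 0 r)
    have hI2 : IntervalIntegrable (fun s : ℝ => K * s ^ (8*n-1)) volume 0 r :=
      ((continuous_const.mul (continuous_pow _)).intervalIntegrable 0 r)
    have hcomp : ∫ s in (0:ℝ)..r, ((M/(4*N-2)) * s ^ (4*n+1) + K * s ^ (8*n-1))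
        = (M/(4*N-2)) * (r ^ (4*n+2) / (4*N+2)) + K * (r ^ (8*n) / (8*N)) := by
      rw [intervalIntegral.integral_add hI1 hI2, intervalIntegral.integral_const_mul,
        intervalIntegral.integral_const_mul, integral_pow, integral_pow]
      have e1 : 4*n+1+1 = 4*n+2 := by omega
      have e2 : 8*n-1+1 = 8*n := by omega
      rw [e1, e2, zero_pow (by omega : 4*n+2 ≠ 0), zero_pow (by omega : 8*n ≠ 0)]
      have c1 : ((4*n+1 : ℕ) : ℝ) + 1 = 4*N+2 := by
        simp only [hNdef]; push_cast; ring
      have c2 : ((8*n-1 : ℕ) : ℝ) + 1 = 8*N := by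
        simp only [hNdef]; push_cast [Nat.cast_sub (by omega : 1 ≤ 8*n)]; ring
      rw [c1, c2]
      ring
    rw [hcomp]
  -- final assembly
  have hcoef : (0:ℝ) < N^2 / r ^ (4*(n:ℤ)+2) := by positivity
  rw [abs_mul, abs_of_pos hcoef]
  have hmain := mul_le_mul_of_nonneg_left houter hcoef.le
  refine le_trans hmain ?_
  have hzu : r ^ (4*(n:ℤ)+2) = r ^ (4*n+2 : ℕ) := by
    rw [← zpow_natCast r (4*n+2)]
    congr 1
  have h8 : r ^ (8*n : ℕ) = r ^ (4*n+2 : ℕ) * r ^ (4*n-2 : ℕ) := by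
    rw [← pow_add]
    congr 1
    omega
  have hwρ : r ^ (4*n-2 : ℕ) * ρ = 1 := by
    rw [hρ, ← zpow_natCast r (4*n-2), ← zpow_add₀ (ne_of_gt hr0)]
    have : ((4*n-2 : ℕ) : ℤ) + x2 = 0 := by
      rw [hx2]; push_cast [Nat.cast_sub (by omega : 2 ≤ 4*n)]; ring
    rw [this, zpow_zero]
  rw [hzu, h8, hK]
  rw [stmt6_aux3 M D N (r ^ (4*n+2 : ℕ)) (r ^ (4*n-2 : ℕ)) ρ (by positivity) hN0
    h42.ne' h43.ne' h44.ne' hwρ]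
  exact stmt6_aux2 M D N hM0 hD0 hN
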